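/- With d, Q, w_I as above, and γ_I defined recursively by γ_I = |𝓐(I)| + ∑_{a∈𝓐(I)} ∑_{I': p(I')=(I,a)} γ_{I'}, the recursively-defined optimal values opt_I = w_I ln( ∑_{a∈𝓐(I)} exp( (∑_{I': p(I')=(I,a)} opt_{I'})/w_I ) ) satisfy opt_I ≤ w_I ln γ_I for every information set I. -/

import Mathlib

open scoped BigOperators

/-- A treeplex: information sets with finite nonempty action sets and a
parent function forming a rooted tree (witnessed by a depth function). -/
structure Treeplex where
  Info : Type
  Act : Info → Type
  finInfo : Fintype Info
  decInfo : DecidableEq Info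
  finAct : ∀ i, Fintype (Act i)
  decAct : ∀ i, DecidableEq (Act i)
  neAct : ∀ i, Nonempty (Act i)
  parent : Info → Option (Σ i : Info, Act i)
  depth : Info → ℕ
  parent_depth : ∀ i' i a, parent i' = some ⟨i, a⟩ → depth i < depth i'

instance (T : Treeplex) : Fintype T.Info := T.finInfo
instance (T : Treeplex) : DecidableEq T.Info := T.decInfo
instance (T : Treeplex) (i : T.Info) : Fintype (T.Act i) := T.finAct i
instance (T : Treeplex) (i : T.Info) : DecidableEq (T.Act i) := T.decAct i
instance (T : Treeplex) (i : T.Info) : Nonempty (T.Act i) := T.neAct i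

namespace Treeplex

/-- The index set Σ = {∅} ∪ {(I,a)}. -/
abbrev Idx (T : Treeplex) := Option (Σ i : T.Info, T.Act i)

/-- The strategy set (sequence-form polytope). -/
def Q (T : Treeplex) : Set (T.Idx → ℝ) :=
  {x | (∀ j, 0 ≤ x j) ∧ x none = 1 ∧
    ∀ i : T.Info, x (T.parent i) = ∑ a : T.Act i, x (some ⟨i, a⟩)}

/-- Sum of `w` over the children information sets of the sequence `(i, a)`. -/
def childSum (T : Treeplex) (w : T.Info → ℝ) (i : T.Info) (a : T.Act i) : ℝ :=
  ∑ i' : T.Info, if T.parent i' = some ⟨i, a⟩ then w i' else 0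

/-- `w` satisfies the recursion `w_I = 1 + max_{a} ∑_{I' : p(I')=(I,a)} w_{I'}`. -/
def IsWeight (T : Treeplex) (w : T.Info → ℝ) : Prop :=
  ∀ i : T.Info,
    w i = 1 + Finset.univ.sup' Finset.univ_nonempty (fun a : T.Act i => T.childSum w i a)

/-- The dilated entropy prox-function
`d(x) = x_∅ ln x_∅ + ∑_{I,a} (w_I − ∑_{p(I')=(I,a)} w_{I'}) x_{I,a} ln x_{I,a}`. -/
noncomputable def prox (T : Treeplex) (w : T.Info → ℝ) (x : T.Idx → ℝ) : ℝ :=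
  x none * Real.log (x none) +
    ∑ i : T.Info, ∑ a : T.Act i,
      (w i - T.childSum w i a) * (x (some ⟨i, a⟩) * Real.log (x (some ⟨i, a⟩)))

end Treeplex

namespace Treeplex

theorem tree_ind (T : Treeplex) (P : T.Info → Prop)
    (h : ∀ i, (∀ i' (a : T.Act i), T.parent i' = some ⟨i, a⟩ → P i') → P i) :
    ∀ i, P i := by
  have key : ∀ n (i : T.Info), (Finset.univ.sup T.depth).succ - T.depth i ≤ n → P i := by
    intro n
    induction n with
    | zero =>
      intro i hi
      exfalso
      have : T.depth i ≤ Finset.univ.sup T.depth := Finset.le_sup (Finset.mem_univ i)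
      omega
    | succ n ih =>
      intro i hi
      apply h
      intro i' a hp
      have h1 : T.depth i < T.depth i' := T.parent_depth i' i a hp
      have h2 : T.depth i' ≤ Finset.univ.sup T.depth := Finset.le_sup (Finset.mem_univ i')
      exact ih i' (by omega)
  exact fun i => key _ i le_rfl

end Treeplex


/-- With `γ_I = |𝓐(I)| + ∑_a ∑_{p(I')=(I,a)} γ_{I'}` and
`opt_I = w_I ln ∑_a exp((∑_{p(I')=(I,a)} opt_{I'})/w_I)`, one has
`opt_I ≤ w_I ln γ_I` for every information set `I`. -/
theorem stmt8 (T : Treeplex) (w : T.Info → ℝ) (hw : T.IsWeight w)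
    (γ : T.Info → ℝ)
    (hγ : ∀ i : T.Info,
      γ i = (Fintype.card (T.Act i) : ℝ) + ∑ a : T.Act i, T.childSum γ i a)
    (opt : T.Info → ℝ)
    (hopt : ∀ i : T.Info,
      opt i = w i * Real.log (∑ a : T.Act i, Real.exp (T.childSum opt i a / w i))) :
    ∀ i : T.Info, opt i ≤ w i * Real.log (γ i) := by
  classical
  -- `1 ≤ w i`
  have hw1 : ∀ i : T.Info, 1 ≤ w i := by
    refine T.tree_ind _ ?_
    intro i ih
    have hcs : ∀ a : T.Act i, 0 ≤ T.childSum w i a := by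
      intro a
      refine Finset.sum_nonneg fun i' _ => ?_
      split_ifs with h
      · linarith [ih i' a h]
      · exact le_rfl
    obtain ⟨a⟩ := T.neAct i
    have := Finset.le_sup' (fun a : T.Act i => T.childSum w i a) (Finset.mem_univ a)
    rw [hw i]
    linarith [hcs a]
  -- `1 ≤ γ i`
  have hγ1 : ∀ i : T.Info, 1 ≤ γ i := by
    refine T.tree_ind _ ?_
    intro i ih
    have hcs : ∀ a : T.Act i, 0 ≤ T.childSum γ i a := by
      intro a
      refine Finset.sum_nonneg fun i' _ => ?_
      split_ifs with h
      · linarith [ih i' a h]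
      · exact le_rfl
    have hcard : (1 : ℝ) ≤ (Fintype.card (T.Act i) : ℝ) := by
      have := Fintype.card_pos (α := T.Act i)
      exact_mod_cast this
    rw [hγ i]
    have : (0:ℝ) ≤ ∑ a : T.Act i, T.childSum γ i a :=
      Finset.sum_nonneg fun a _ => hcs a
    linarith
  -- main induction
  refine T.tree_ind _ ?_
  intro i ih
  have hwpos : (0:ℝ) < w i := lt_of_lt_of_le one_pos (hw1 i)
  -- children weight sums bounded by `w i - 1`
  have hchild_le : ∀ a : T.Act i, T.childSum w i a ≤ w i - 1 := by
    intro a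
    have := Finset.le_sup' (fun a : T.Act i => T.childSum w i a) (Finset.mem_univ a)
    rw [hw i]; linarith [this]
  -- per-action bound
  have key : ∀ a : T.Act i,
      Real.exp (T.childSum opt i a / w i) ≤ 1 + T.childSum γ i a := by
    intro a
    set t : T.Info → ℝ := fun i' =>
      if T.parent i' = some ⟨i, a⟩ then w i' / w i else 0 with ht
    set Z : T.Info → ℝ := fun i' =>
      if T.parent i' = some ⟨i, a⟩ then γ i' else 1 with hZ
    have htnn : ∀ i', 0 ≤ t i' := by
      intro i'; simp only [ht]
      split_ifs with h
      · exact div_nonneg (by linarith [hw1 i']) hwpos.le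
      · exact le_rfl
    have hZ1 : ∀ i', 1 ≤ Z i' := by
      intro i'; simp only [hZ]; split_ifs with h
      · exact hγ1 i'
      · exact le_rfl
    have htsum : ∑ i', t i' ≤ 1 := by
      have : ∑ i', t i' = T.childSum w i a / w i := by
        rw [Treeplex.childSum, Finset.sum_div]
        refine Finset.sum_congr rfl fun i' _ => ?_
        simp only [ht]; split_ifs <;> simp
      rw [this, div_le_one hwpos]
      linarith [hchild_le a]
    -- step 1: bound the exponent
    have step1 : T.childSum opt i a / w i ≤ ∑ i', t i' * Real.log (Z i') := by
      rw [Treeplex.childSum, Finset.sum_div]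
      refine Finset.sum_le_sum fun i' _ => ?_
      simp only [ht, hZ]
      split_ifs with h
      · rw [div_mul_eq_mul_div, div_le_div_iff_of_pos_right hwpos] at *
        have hwi' : 0 < w i' := lt_of_lt_of_le one_pos (hw1 i')
        calc opt i' ≤ w i' * Real.log (γ i') := ih i' a h
          _ = _ := rfl
      · simp
    -- step 2: AM-GM with slack index
    have step2 : Real.exp (∑ i', t i' * Real.log (Z i')) ≤ 1 + T.childSum γ i a := by
      set W : Option T.Info → ℝ := fun o =>
        Option.elim o (1 - ∑ i', t i') t with hW
      set V : Option T.Info → ℝ := fun o => Option.elim o 1 Z with hV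
      have hWnn : ∀ o ∈ (Finset.univ : Finset (Option T.Info)), 0 ≤ W o := by
        rintro (_ | i') _
        · simp only [hW, Option.elim]; linarith [htsum]
        · exact htnn i'
      have hWsum : ∑ o : Option T.Info, W o = 1 := by
        rw [Fintype.sum_option]; simp [hW]
      have hVnn : ∀ o ∈ (Finset.univ : Finset (Option T.Info)), 0 ≤ V o := by
        rintro (_ | i') _
        · norm_num [hV]
        · exact le_trans zero_le_one (hZ1 i')
      have hAMGM := Real.geom_mean_le_arith_mean_weighted Finset.univ W V hWnn hWsum hVnn
      have hprod : ∏ o : Option T.Info, V o ^ W o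
          = Real.exp (∑ i', t i' * Real.log (Z i')) := by
        rw [Fintype.prod_option, Real.exp_sum]
        simp only [hV, hW, Option.elim]
        rw [Real.one_rpow, one_mul]
        refine Finset.prod_congr rfl fun i' _ => ?_
        have hZpos : (0:ℝ) < Z i' := lt_of_lt_of_le one_pos (hZ1 i')
        rw [Real.rpow_def_of_pos hZpos, mul_comm]
      rw [hprod] at hAMGM
      refine le_trans hAMGM ?_
      rw [Fintype.sum_option]
      simp only [hV, hW, Option.elim, mul_one]
      have hsum2 : ∑ i', t i' * Z i' ≤ T.childSum γ i a := by
        rw [Treeplex.childSum]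
        refine Finset.sum_le_sum fun i' _ => ?_
        simp only [ht, hZ]
        split_ifs with h
        · have hterm : w i' ≤ T.childSum w i a := by
            rw [Treeplex.childSum]
            have hs := Finset.single_le_sum (f := fun i'' =>
              if T.parent i'' = some ⟨i, a⟩ then w i'' else 0)
              (fun j _ => by split_ifs with hj
                             · linarith [hw1 j]
                             · exact le_rfl) (Finset.mem_univ i')
            simpa [h] using hs
          have hle1 : w i' / w i ≤ 1 := by
            rw [div_le_one hwpos]; linarith [hchild_le a]
          have hwi'nn : 0 ≤ w i' / w i :=
            div_nonneg (by linarith [hw1 i']) hwpos.le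
          nlinarith [hγ1 i']
        · simp
      have htnn' : (0:ℝ) ≤ ∑ i', t i' := Finset.sum_nonneg fun i' _ => htnn i'
      linarith [htsum, hsum2, htnn']
    calc Real.exp (T.childSum opt i a / w i)
        ≤ Real.exp (∑ i', t i' * Real.log (Z i')) := Real.exp_le_exp.mpr step1
      _ ≤ 1 + T.childSum γ i a := step2
  -- combine over actions
  have hsumpos : (0:ℝ) < ∑ a : T.Act i, Real.exp (T.childSum opt i a / w i) := by
    refine Finset.sum_pos (fun a _ => Real.exp_pos _) Finset.univ_nonempty
  have hsumle : ∑ a : T.Act i, Real.exp (T.childSum opt i a / w i) ≤ γ i := by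
    rw [hγ i]
    calc ∑ a : T.Act i, Real.exp (T.childSum opt i a / w i)
        ≤ ∑ a : T.Act i, (1 + T.childSum γ i a) := Finset.sum_le_sum fun a _ => key a
      _ = (Fintype.card (T.Act i) : ℝ) + ∑ a : T.Act i, T.childSum γ i a := by
          rw [Finset.sum_add_distrib]; simp [Finset.card_univ]
  rw [hopt i]
  exact mul_le_mul_of_nonneg_left (Real.log_le_log hsumpos hsumle) hwpos.le
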